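/- Smooth noiseless DoG rate: if $f$ is convex with $S$-Lipschitz gradient, minimized at $x^\star$, then for any sequence $x_0,\ldots,x_{T-1}$ with $\frac{1}{T}\sum_{t=0}^{T-1}(f(x_t) - f(x^\star)) \le \frac{C\sqrt{G_{T-1}}}{T}$ where $G_{T-1} = \sum_{t=0}^{T-1}\|\nabla f(x_t)\|^2$ and $C \ge 0$, it holds that $\frac{1}{T}\sum_{t=0}^{T-1}(f(x_t) - f(x^\star)) \le \frac{2 S C^2}{T}$. -/

import Mathlib

open Finset
open scoped RealInnerProductSpace

private lemma gauss_aux (n : ℕ) :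
    ∑ k ∈ Finset.range n, ((k:ℝ) + 1) = n * (n + 1) / 2 := by
  induction n with
  | zero => simp
  | succ m ih => rw [Finset.sum_range_succ, ih]; push_cast; ring

/-- Smooth noiseless DoG rate: if `f` is convex with `S`-Lipschitz gradient and
the average suboptimality is at most `C √(G_{T-1}) / T` with
`G_{T-1} = ∑_{t<T} ‖∇f(x_t)‖²`, then it is at most `2 S C² / T`. -/
theorem smooth_noiseless_rate {H : Type*} [NormedAddCommGroup H]
    [InnerProductSpace ℝ H]
    (f : H → ℝ) (gf : H → H) (S : ℝ) (hS : 0 ≤ S)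
    (hconv : ∀ y z : H, f y + ⟪gf y, z - y⟫ ≤ f z)
    (hlip : ∀ y z : H, ‖gf y - gf z‖ ≤ S * ‖y - z‖)
    (xs : H) (hmin : ∀ y, f xs ≤ f y)
    (T : ℕ) (hT : 1 ≤ T) (x : ℕ → H) (C : ℝ) (hC : 0 ≤ C)
    (hbound : (1 / (T : ℝ)) * ∑ t ∈ Finset.range T, (f (x t) - f xs)
      ≤ C * Real.sqrt (∑ t ∈ Finset.range T, ‖gf (x t)‖ ^ 2) / T) :
    (1 / (T : ℝ)) * ∑ t ∈ Finset.range T, (f (x t) - f xs)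
      ≤ 2 * S * C ^ 2 / T := by
  -- Key smoothness fact: ‖∇f(y)‖² ≤ 2 S (f y - f x⋆).
  have key : ∀ y : H, ‖gf y‖ ^ 2 ≤ 2 * S * (f y - f xs) := by
    intro y
    set g := gf y with hg
    have hfy : (0:ℝ) ≤ f y - f xs := sub_nonneg.mpr (hmin y)
    rcases eq_or_lt_of_le hS with hS0 | hSpos
    · -- S = 0 : the gradient is constant and must vanish at the minimizer.
      have hconst : gf (xs - g) = g := by
        have h := hlip (xs - g) y
        rw [← hS0, zero_mul] at h
        have : gf (xs - g) - g = 0 :=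
          norm_eq_zero.mp (le_antisymm h (norm_nonneg _))
        exact sub_eq_zero.mp this
      have h1 := hconv (xs - g) xs
      have h2 := hmin (xs - g)
      have h3 : ⟪gf (xs - g), xs - (xs - g)⟫ ≤ 0 := by linarith
      rw [hconst, show xs - (xs - g) = g by abel] at h3
      rw [real_inner_self_eq_norm_sq] at h3
      nlinarith
    · -- S > 0 : subdivision argument along the segment from y to y - g/S.
      by_contra hcon
      push_neg at hcon
      set δ : ℝ := ‖g‖ ^ 2 - 2 * S * (f y - f xs) with hδ
      have hδpos : 0 < δ := by simpa [hδ] using sub_pos.mpr hcon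
      have hmain : ∀ n : ℕ, 1 ≤ n → δ * n ≤ ‖g‖ ^ 2 := by
        intro n hn
        have hnpos : (0:ℝ) < n := by exact_mod_cast hn
        have hnS : (0:ℝ) < n * S := mul_pos hnpos hSpos
        set w : ℕ → H := fun k => y - ((k : ℝ) / (n * S)) • g with hw
        have hstep : ∀ k ∈ Finset.range n,
            (1 / ((n:ℝ) * S)) * ((1 - ((k:ℝ)+1)/n) * ‖g‖ ^ 2)
              ≤ f (w k) - f (w (k+1)) := by
          intro k hk
          have hcv := hconv (w (k+1)) (w k)
          have hdiff : w k - w (k+1) = (1 / ((n:ℝ) * S)) • g := by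
            simp only [hw]
            have h4 : (((k:ℝ)+1) / ((n:ℝ)*S) - (k:ℝ)/((n:ℝ)*S)) = 1 / ((n:ℝ)*S) := by
              field_simp
              ring
            rw [← h4]
            push_cast
            module
          have hwy : w (k+1) - y = -((((k:ℝ)+1) / ((n:ℝ) * S)) • g) := by
            simp only [hw]; push_cast; module
          have hnormwy : ‖w (k+1) - y‖ = (((k:ℝ)+1) / ((n:ℝ) * S)) * ‖g‖ := by
            rw [hwy, norm_neg, norm_smul, Real.norm_eq_abs,
              abs_of_nonneg (by positivity)]
          have hlipk : ‖gf (w (k+1)) - g‖ ≤ (((k:ℝ)+1) / n) * ‖g‖ := by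
            have h5 := hlip (w (k+1)) y
            rw [hnormwy] at h5
            calc ‖gf (w (k+1)) - g‖ ≤ S * ((((k:ℝ)+1) / ((n:ℝ) * S)) * ‖g‖) := h5
              _ = (((k:ℝ)+1) / n) * ‖g‖ := by field_simp
          have hinner : (1 - ((k:ℝ)+1)/n) * ‖g‖ ^ 2 ≤ ⟪gf (w (k+1)), g⟫ := by
            have h1 : ⟪gf (w (k+1)), g⟫ = ‖g‖ ^ 2 + ⟪gf (w (k+1)) - g, g⟫ := by
              rw [inner_sub_left, real_inner_self_eq_norm_sq]; ring
            have h2 : -(‖gf (w (k+1)) - g‖ * ‖g‖) ≤ ⟪gf (w (k+1)) - g, g⟫ := by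
              have := abs_real_inner_le_norm (gf (w (k+1)) - g) g
              linarith [neg_abs_le ⟪gf (w (k+1)) - g, g⟫]
            have h3 : ‖gf (w (k+1)) - g‖ * ‖g‖ ≤ (((k:ℝ)+1)/n) * ‖g‖ * ‖g‖ :=
              mul_le_mul_of_nonneg_right hlipk (norm_nonneg g)
            nlinarith [norm_nonneg g]
          have hinner2 : ⟪gf (w (k+1)), w k - w (k+1)⟫
              = (1 / ((n:ℝ) * S)) * ⟪gf (w (k+1)), g⟫ := by
            rw [hdiff, real_inner_smul_right]
          have h6 : (1 / ((n:ℝ) * S)) * ((1 - ((k:ℝ)+1)/n) * ‖g‖ ^ 2)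
              ≤ ⟪gf (w (k+1)), w k - w (k+1)⟫ := by
            rw [hinner2]
            exact mul_le_mul_of_nonneg_left hinner (by positivity)
          linarith [hcv]
        have hsum := Finset.sum_le_sum hstep
        rw [Finset.sum_range_sub' (fun k => f (w k)) n] at hsum
        have hw0 : w 0 = y := by simp [hw]
        have hfrac : ∑ k ∈ Finset.range n, (1 - ((k:ℝ)+1)/n) = ((n:ℝ)-1)/2 := by
          rw [Finset.sum_sub_distrib, Finset.sum_const, Finset.card_range,
            ← Finset.sum_div, gauss_aux]
          field_simp
          ring
        have hsumval : ∑ k ∈ Finset.range n,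
            (1 / ((n:ℝ) * S)) * ((1 - ((k:ℝ)+1)/n) * ‖g‖ ^ 2)
            = (1 / ((n:ℝ) * S) * ‖g‖ ^ 2) * (((n:ℝ)-1)/2) := by
          rw [← hfrac, Finset.mul_sum]
          exact Finset.sum_congr rfl fun k _ => by ring
        rw [hsumval, hw0] at hsum
        have hD : (1 / ((n:ℝ) * S) * ‖g‖ ^ 2) * (((n:ℝ)-1)/2) ≤ f y - f xs :=
          le_trans hsum (by linarith [hmin (w n)])
        have h2 : ‖g‖ ^ 2 * ((n:ℝ) - 1) ≤ 2 * ((n:ℝ) * S) * (f y - f xs) := by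
          have h3 := mul_le_mul_of_nonneg_left hD
            (by positivity : (0:ℝ) ≤ 2 * ((n:ℝ) * S))
          calc ‖g‖ ^ 2 * ((n:ℝ) - 1)
              = 2 * ((n:ℝ) * S) * ((1 / ((n:ℝ) * S) * ‖g‖ ^ 2) * (((n:ℝ)-1)/2)) := by
                field_simp
            _ ≤ 2 * ((n:ℝ) * S) * (f y - f xs) := h3
        rw [hδ]
        nlinarith [h2]
      obtain ⟨n, hn⟩ := exists_nat_gt (‖g‖ ^ 2 / δ)
      have hn1 : 1 ≤ n := by
        by_contra h
        push_neg at h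
        interval_cases n
        have : (0:ℝ) ≤ ‖g‖ ^ 2 / δ := div_nonneg (sq_nonneg _) hδpos.le
        push_cast at hn
        linarith
      have h7 : (n:ℝ) ≤ ‖g‖ ^ 2 / δ := by
        rw [le_div_iff₀ hδpos]; linarith [hmain n hn1]
      linarith
  -- Now combine with the assumed bound.
  set D : ℝ := ∑ t ∈ Finset.range T, (f (x t) - f xs) with hD
  have hDnn : 0 ≤ D :=
    Finset.sum_nonneg fun t _ => sub_nonneg.mpr (hmin (x t))
  have hTpos : (0:ℝ) < T := by exact_mod_cast hT
  have hG : (∑ t ∈ Finset.range T, ‖gf (x t)‖ ^ 2) ≤ 2 * S * D := by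
    rw [hD, Finset.mul_sum]
    exact Finset.sum_le_sum fun t _ => key (x t)
  have hGnn : (0:ℝ) ≤ ∑ t ∈ Finset.range T, ‖gf (x t)‖ ^ 2 :=
    Finset.sum_nonneg fun t _ => sq_nonneg _
  have hsqrt : Real.sqrt (∑ t ∈ Finset.range T, ‖gf (x t)‖ ^ 2)
      ≤ Real.sqrt (2 * S * D) := Real.sqrt_le_sqrt hG
  have hb2 : D / T ≤ C * Real.sqrt (2 * S * D) / T := by
    calc D / T = (1 / (T:ℝ)) * D := by ring
      _ ≤ C * Real.sqrt (∑ t ∈ Finset.range T, ‖gf (x t)‖ ^ 2) / T := hbound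
      _ ≤ C * Real.sqrt (2 * S * D) / T := by
          gcongr
  have hb3 : D ≤ C * Real.sqrt (2 * S * D) := by
    have h := mul_le_mul_of_nonneg_right hb2 hTpos.le
    rwa [div_mul_cancel₀ _ hTpos.ne', div_mul_cancel₀ _ hTpos.ne'] at h
  have hsq : D ^ 2 ≤ C ^ 2 * (2 * S * D) := by
    have h1 : 0 ≤ C * Real.sqrt (2 * S * D) :=
      mul_nonneg hC (Real.sqrt_nonneg _)
    have h2 : (C * Real.sqrt (2 * S * D)) ^ 2 = C ^ 2 * (2 * S * D) := by
      rw [mul_pow, Real.sq_sqrt (by positivity)]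
    nlinarith
  have hfin : D ≤ 2 * S * C ^ 2 := by
    rcases eq_or_lt_of_le hDnn with h | h
    · rw [← h]; positivity
    · have h4 : D * D ≤ (2 * S * C ^ 2) * D := by
        calc D * D = D ^ 2 := (sq D).symm
          _ ≤ C ^ 2 * (2 * S * D) := hsq
          _ = (2 * S * C ^ 2) * D := by ring
      exact le_of_mul_le_mul_right h4 h
  calc (1 / (T:ℝ)) * D = D / T := by ring
    _ ≤ 2 * S * C ^ 2 / T := by gcongr
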